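/- Let N be a squarefree positive integer, let q be a prime divisor of N, and let K be a natural number. Then the number of integers a with 1 ≤ a ≤ ⌊K·N/(q − 1)⌋ that are coprime to N equals K·φ(N/q). Hence for each prime divisor q of N, the interval [0, N] is divided uniformly into q − 1 cycles of length N/(q − 1), each containing exactly φ(N/q) integers coprime to N. -/

import Mathlib

open Finset ArithmeticFunction
open scoped ArithmeticFunction.Moebius ArithmeticFunction.zeta

lemma sum_moebius_divisors (k : ℕ) (hk : 0 < k) :
    ∑ d ∈ k.divisors, (μ d : ℤ) = if k = 1 then 1 else 0 := by
  have h := congrArg (fun f : ArithmeticFunction ℤ => f k) moebius_mul_coe_zeta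
  simp only [mul_apply, one_apply, natCoe_apply] at h
  rw [← h, Nat.sum_divisorsAntidiagonal (f := fun i j => (μ i : ℤ) * ((ζ j : ℕ) : ℤ))]
  refine Finset.sum_congr rfl fun d hd => ?_
  have : k / d ≠ 0 :=
    (Nat.div_pos (Nat.le_of_dvd hk (Nat.dvd_of_mem_divisors hd)) (Nat.pos_of_mem_divisors hd)).ne'
  rw [ArithmeticFunction.zeta_apply_ne this]
  simp

lemma count_coprime_eq (n x : ℕ) (hn : 0 < n) :
    (((Finset.Ioc 0 x).filter (fun a => Nat.Coprime a n)).card : ℤ) =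
      ∑ d ∈ n.divisors, (μ d : ℤ) * (x / d : ℕ) := by
  rw [Finset.card_filter, Nat.cast_sum]
  have key : ∀ a ∈ Finset.Ioc 0 x, ((if Nat.Coprime a n then 1 else 0 : ℕ) : ℤ) =
      ∑ d ∈ n.divisors, if d ∣ a then (μ d : ℤ) else 0 := by
    intro a ha
    have ha0 : 0 < a := (Finset.mem_Ioc.1 ha).1
    have hg : 0 < Nat.gcd a n := Nat.gcd_pos_of_pos_left n ha0
    have hdiv : (Nat.gcd a n).divisors = n.divisors.filter (· ∣ a) := by
      ext d
      simp only [Nat.mem_divisors, Finset.mem_filter, Nat.dvd_gcd_iff]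
      constructor
      · rintro ⟨⟨h1, h2⟩, -⟩; exact ⟨⟨h2, hn.ne'⟩, h1⟩
      · rintro ⟨⟨h2, -⟩, h1⟩; exact ⟨⟨h1, h2⟩, hg.ne'⟩
    have := sum_moebius_divisors (Nat.gcd a n) hg
    rw [hdiv, Finset.sum_filter] at this
    rw [this]
    unfold Nat.Coprime
    split <;> simp_all
  rw [Finset.sum_congr rfl key, Finset.sum_comm]
  refine Finset.sum_congr rfl fun d hd => ?_
  rw [← Finset.sum_filter, Finset.sum_const, nsmul_eq_mul, mul_comm]
  congr 1
  rw [← Nat.Ioc_filter_dvd_card_eq_div x d]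

lemma totient_moebius_sum (n : ℕ) (hn : 0 < n) :
    ((Nat.totient n : ℤ)) = ∑ d ∈ n.divisors, (μ d : ℤ) * ((n / d : ℕ) : ℤ) := by
  have H : ∀ k, k > 0 → ∑ i ∈ (k : ℕ).divisors, ((Nat.totient i : ℤ)) = ((k : ℕ) : ℤ) := by
    intro k hk
    rw [← Nat.cast_sum]
    exact_mod_cast congrArg (Nat.cast : ℕ → ℤ) (Nat.sum_totient k)
  have := (ArithmeticFunction.sum_eq_iff_sum_smul_moebius_eq
    (f := fun i => (Nat.totient i : ℤ)) (g := fun k => (k : ℤ))).1 H n hn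
  rw [← this, Nat.sum_divisorsAntidiagonal (f := fun i j => (μ i : ℤ) • (j : ℤ))]
  simp [smul_eq_mul]

lemma sum_divisors_prime_mul (q m : ℕ) (hq : q.Prime) (hm : 0 < m) (hqm : ¬ q ∣ m)
    (F : ℕ → ℤ) :
    ∑ d ∈ (q * m).divisors, F d =
      ∑ d ∈ m.divisors, F d + ∑ d ∈ m.divisors, F (q * d) := by
  have hset : (q * m).divisors = m.divisors ∪ m.divisors.image (q * ·) := by
    ext d
    simp only [Nat.mem_divisors, Finset.mem_union, Finset.mem_image]
    constructor
    · rintro ⟨hd, -⟩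
      by_cases hqd : q ∣ d
      · obtain ⟨e, rfl⟩ := hqd
        exact Or.inr ⟨e, ⟨(Nat.mul_dvd_mul_iff_left hq.pos).1 hd, hm.ne'⟩, rfl⟩
      · refine Or.inl ⟨?_, hm.ne'⟩
        have hco : Nat.Coprime d q := ((hq.coprime_iff_not_dvd).2 hqd).symm
        rw [mul_comm] at hd
        exact hco.dvd_of_dvd_mul_left (by rwa [mul_comm m q] at hd)
    · rintro (⟨hd, -⟩ | ⟨e, ⟨he, -⟩, rfl⟩)
      · exact ⟨hd.mul_left q, Nat.mul_ne_zero hq.pos.ne' hm.ne'⟩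
      · exact ⟨Nat.mul_dvd_mul_left q he, Nat.mul_ne_zero hq.pos.ne' hm.ne'⟩
  have hdisj : Disjoint m.divisors (m.divisors.image (q * ·)) := by
    rw [Finset.disjoint_right]
    rintro d hd hdm
    obtain ⟨e, _, rfl⟩ := Finset.mem_image.1 hd
    exact hqm (dvd_trans (Dvd.intro e rfl) (Nat.dvd_of_mem_divisors hdm))
  rw [hset, Finset.sum_union hdisj, Finset.sum_image
    (fun a _ b _ h => Nat.eq_of_mul_eq_mul_left hq.pos h)]

lemma div_key (q r : ℕ) (hq : 1 < q) : q * r / (q - 1) = r + r / (q - 1) := by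
  obtain ⟨s, rfl⟩ : ∃ s, q = s + 1 := ⟨q - 1, by omega⟩
  have h1 : 0 < s := by omega
  simp only [Nat.add_sub_cancel]
  have h2 : (s + 1) * r = r + s * r := by ring
  rw [h2, Nat.add_mul_div_left _ _ h1, Nat.add_comm]

theorem mPrime_distribution (N : ℕ) (hN : 0 < N) (hsq : Squarefree N)
    (q : ℕ) (hq : q.Prime) (hqN : q ∣ N) (K : ℕ) :
    ((Finset.Icc 1 (K * N / (q - 1))).filter (fun a => Nat.Coprime a N)).card =
      K * Nat.totient (N / q) := by
  obtain ⟨m, hm⟩ := hqN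
  have hq1 : 1 < q := hq.one_lt
  have hq1' : 0 < q - 1 := by omega
  have hm0 : 0 < m := by
    rcases Nat.eq_zero_or_pos m with h | h
    · subst h; simp [hm] at hN
    · exact h
  have hqm : ¬ q ∣ m := by
    rintro ⟨e, rfl⟩
    exact hq.not_isUnit (hsq q ⟨e, by rw [hm]; ring⟩)
  have hNq : N / q = m := by rw [hm, Nat.mul_div_cancel_left _ hq.pos]
  set t := K * N / (q - 1) with ht
  have hIcc : Finset.Icc 1 t = Finset.Ioc 0 t := by
    ext a; simp only [Finset.mem_Icc, Finset.mem_Ioc]; omega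
  rw [hIcc, hNq]
  have hcount := count_coprime_eq N t hN
  have key : ∑ d ∈ N.divisors, (μ d : ℤ) * ((t / d : ℕ) : ℤ) =
      (K : ℤ) * (Nat.totient m : ℤ) := by
    rw [hm, sum_divisors_prime_mul q m hq hm0 hqm, ← Finset.sum_add_distrib]
    have hterm : ∀ d ∈ m.divisors,
        (μ d : ℤ) * ((t / d : ℕ) : ℤ) + (μ (q * d) : ℤ) * ((t / (q * d) : ℕ) : ℤ) =
        (μ d : ℤ) * ((m / d : ℕ) : ℤ) * (K : ℤ) := by
      intro d hd
      have hd0 : 0 < d := Nat.pos_of_mem_divisors hd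
      obtain ⟨m', hm'⟩ := Nat.dvd_of_mem_divisors hd
      set r := K * m' with hr
      have hnum : K * N = q * r * d := by rw [hm, hm']; ring
      have hA : t / d = r + r / (q - 1) := by
        rw [ht, Nat.div_div_eq_div_mul, hnum, Nat.mul_div_mul_right _ _ hd0, div_key q r hq1]
      have hB : t / (q * d) = r / (q - 1) := by
        rw [ht, Nat.div_div_eq_div_mul]
        have hnum2 : K * N = r * (q * d) := by rw [hm, hm']; ring
        rw [hnum2, Nat.mul_div_mul_right _ _ (Nat.mul_pos hq.pos hd0)]
      have hC : (μ (q * d) : ℤ) = - (μ d : ℤ) := by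
        have hco : Nat.Coprime q d := (hq.coprime_iff_not_dvd).2
          (fun h => hqm (h.trans (Nat.dvd_of_mem_divisors hd)))
        rw [ArithmeticFunction.isMultiplicative_moebius.map_mul_of_coprime hco,
          ArithmeticFunction.moebius_apply_prime hq]
        ring
      have hmd : m / d = m' := by rw [hm', Nat.mul_div_cancel_left _ hd0]
      rw [hA, hB, hC, hmd]
      simp only [hr]
      push_cast
      ring
    rw [Finset.sum_congr rfl hterm]
    rw [totient_moebius_sum m hm0, Finset.mul_sum]
    exact Finset.sum_congr rfl fun d _ => by ring
  have : (((Finset.Ioc 0 t).filter (fun a => Nat.Coprime a N)).card : ℤ) =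
      ((K * Nat.totient m : ℕ) : ℤ) := by
    rw [hcount, key]; push_cast; ring
  exact_mod_cast this
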